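/- In the locking setup, fix an (s,η)-quasi-measurement 𝓜 on C⊗E′ and define g_𝓜(U) = ‖𝓜(ρ_U^{MCE′}) − 𝓜(ρ_U^M ⊗ ρ_U^{CE′})‖₁ for unitaries U on C⊗K⊗E. Then for all unitaries U, V on C⊗K⊗E: |g_𝓜(U) − g_𝓜(V)| ≤ 4η·√( (max_m p_m)·‖ω^E‖_∞ )·‖U − V‖₂ = 4η·√( Δ_{M,∞}·Δ_{E,∞}/(|M|·|E|) )·‖U − V‖₂. That is, g_𝓜 is Lipschitz with constant 4η·√(Δ_{M,∞}Δ_{E,∞}/(|M||E|)) with respect to the Frobenius distance on unitaries. -/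

import Mathlib

open scoped BigOperators Kronecker Classical ComplexOrder
open Matrix MeasureTheory

noncomputable section

/-- Outer product `|v⟩⟨v|`. -/
def outer {A : Type*} [Fintype A] (v : A → ℂ) : Matrix A A ℂ :=
  Matrix.of fun i j => v i * star (v j)

/-- Trace norm `‖X‖₁ = Tr √(XᴴX)`. -/
def traceNorm {A : Type*} [Fintype A] [DecidableEq A] (X : Matrix A A ℂ) : ℝ :=
  ((Matrix.posSemidef_conjTranspose_mul_self X).1.eigenvectorUnitary.1 *
      Matrix.diagonal (fun i : A =>
        ((Real.sqrt ((Matrix.posSemidef_conjTranspose_mul_self X).1.eigenvalues i) : ℝ) : ℂ)) *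
      (star (Matrix.posSemidef_conjTranspose_mul_self X).1.eigenvectorUnitary :
        Matrix A A ℂ)).trace.re

/-- Frobenius norm `‖X‖₂`. -/
def frobNorm {A : Type*} [Fintype A] (X : Matrix A A ℂ) : ℝ :=
  Real.sqrt ((Xᴴ * X).trace.re)

/-- Operator norm (largest singular value) `‖X‖_∞`. -/
def opNorm {A : Type*} [Fintype A] [DecidableEq A] (X : Matrix A A ℂ) : ℝ :=
  ‖Matrix.toEuclideanCLM (𝕜 := ℂ) X‖

instance matrixMeasurableSpace {m n : Type*} : MeasurableSpace (Matrix m n ℂ) :=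
  inferInstanceAs (MeasurableSpace (m → n → ℂ))

/-- A measurement superoperator (given by its POVM elements `Ms`) applied to the second
factor of a bipartite operator, tensored with the identity on the first factor `W`. -/
def measApply {W A X : Type*} [Fintype A] [DecidableEq X]
    (Ms : X → Matrix A A ℂ) (ρ : Matrix (W × A) (W × A) ℂ) :
    Matrix (W × X) (W × X) ℂ :=
  Matrix.of fun p q =>
    if p.2 = q.2 then ∑ a : A, ∑ a' : A, Ms p.2 a a' * ρ (p.1, a') (q.1, a) else 0

/-- A measurement superoperator applied to an operator (no side register). -/
def measApply0 {A X : Type*} [Fintype A] [DecidableEq X]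
    (Ms : X → Matrix A A ℂ) (ρ : Matrix A A ℂ) : Matrix X X ℂ :=
  Matrix.of fun i j => if i = j then ∑ a : A, ∑ a' : A, Ms i a a' * ρ a' a else 0

/-- The elements `Ms` form a POVM: each is positive semidefinite and they sum to `I`. -/
def IsPOVM {A X : Type*} [Fintype A] [Fintype X] [DecidableEq A]
    (Ms : X → Matrix A A ℂ) : Prop :=
  (∀ i, (Ms i).PosSemidef) ∧ ∑ i, Ms i = 1

/-- The tuple of unit vectors `χ` defines an `(s,η)`-quasi-measurement:
`(|A|/s) ∑ᵢ |χᵢ⟩⟨χᵢ| ≤ η I`. -/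
def IsQuasiTuple {A : Type*} [Fintype A] [DecidableEq A] (s : ℕ) (η : ℝ)
    (χ : Fin s → A → ℂ) : Prop :=
  (∀ i, ∑ a, Complex.normSq (χ i a) = 1) ∧
  ((η : ℂ) • (1 : Matrix A A ℂ) -
    ((Fintype.card A : ℂ) / (s : ℂ)) • ∑ i, outer (χ i)).PosSemidef

/-- The kernel elements `(|A|/s)|χᵢ⟩⟨χᵢ|` of an `(s,η)`-quasi-measurement. -/
def quasiKernel {A : Type*} [Fintype A] (s : ℕ) (χ : Fin s → A → ℂ) :
    Fin s → Matrix A A ℂ :=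
  fun i => ((Fintype.card A : ℂ) / (s : ℂ)) • outer (χ i)
/-- The vector `(U ⊗ I_{E'})(|ψ_m⟩ ⊗ |ω⟩)` on `(C⊗K⊗E)⊗E'`. -/
def lockVec (dM dC dK dE dE' : ℕ) (ψ : Fin dM → Fin dC × Fin dK → ℂ)
    (ω : Fin dE × Fin dE' → ℂ)
    (U : Matrix ((Fin dC × Fin dK) × Fin dE) ((Fin dC × Fin dK) × Fin dE) ℂ)
    (m : Fin dM) : ((Fin dC × Fin dK) × Fin dE) × Fin dE' → ℂ :=
  fun q => ∑ r : (Fin dC × Fin dK) × Fin dE, U q.1 r * (ψ m r.1 * ω (r.2, q.2))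

/-- `ρ_U^{MCE'}`, the reduced state of
`ρ_U = ∑ₘ pₘ |m⟩⟨m| ⊗ (U⊗I)(|ψₘ⟩⟨ψₘ| ⊗ |ω⟩⟨ω|)(U⊗I)ᴴ` on `M⊗C⊗E'`. -/
def rhoMCE' (dM dC dK dE dE' : ℕ) (p : Fin dM → ℝ)
    (ψ : Fin dM → Fin dC × Fin dK → ℂ) (ω : Fin dE × Fin dE' → ℂ)
    (U : Matrix ((Fin dC × Fin dK) × Fin dE) ((Fin dC × Fin dK) × Fin dE) ℂ) :
    Matrix (Fin dM × (Fin dC × Fin dE')) (Fin dM × (Fin dC × Fin dE')) ℂ :=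
  Matrix.of fun x y =>
    (if x.1 = y.1 then (p x.1 : ℂ) else 0) *
      ∑ k : Fin dK, ∑ e : Fin dE,
        lockVec dM dC dK dE dE' ψ ω U x.1 (((x.2.1, k), e), x.2.2) *
          star (lockVec dM dC dK dE dE' ψ ω U y.1 (((y.2.1, k), e), y.2.2))

/-- `ρ^M = ∑ₘ pₘ |m⟩⟨m|`. -/
def rhoM (dM : ℕ) (p : Fin dM → ℝ) : Matrix (Fin dM) (Fin dM) ℂ :=
  Matrix.diagonal fun m => (p m : ℂ)

/-- `ρ_U^{CE'}`. -/
def rhoCE' (dM dC dK dE dE' : ℕ) (p : Fin dM → ℝ)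
    (ψ : Fin dM → Fin dC × Fin dK → ℂ) (ω : Fin dE × Fin dE' → ℂ)
    (U : Matrix ((Fin dC × Fin dK) × Fin dE) ((Fin dC × Fin dK) × Fin dE) ℂ) :
    Matrix (Fin dC × Fin dE') (Fin dC × Fin dE') ℂ :=
  Matrix.of fun x y => ∑ m : Fin dM, rhoMCE' dM dC dK dE dE' p ψ ω U (m, x) (m, y)

/-- The reduced state `ω^E = Tr_{E'} |ω⟩⟨ω|`. -/
def omegaE (dE dE' : ℕ) (ω : Fin dE × Fin dE' → ℂ) : Matrix (Fin dE) (Fin dE) ℂ :=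
  Matrix.of fun e e' => ∑ f : Fin dE', ω (e, f) * star (ω (e', f))

namespace LockAux

/-- Cauchy-Schwarz, sqrt form. -/
lemma sum_le_sqrt_mul_sqrt {ι : Type*} (s : Finset ι) (f g : ι → ℝ)
    (hf : ∀ i ∈ s, 0 ≤ f i) (hg : ∀ i ∈ s, 0 ≤ g i) :
    ∑ i ∈ s, f i * g i ≤ Real.sqrt (∑ i ∈ s, f i ^ 2) * Real.sqrt (∑ i ∈ s, g i ^ 2) := by
  rw [← Real.sqrt_mul (Finset.sum_nonneg fun i hi => sq_nonneg _)]
  exact Real.le_sqrt_of_sq_le (Finset.sum_mul_sq_le_sq_mul_sq s f g)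

lemma traceNorm_diagonal {A : Type*} [Fintype A] [DecidableEq A] (d : A → ℂ) :
    traceNorm (Matrix.diagonal d) = ∑ a, ‖d a‖ := by
  have hD : (Matrix.diagonal d)ᴴ * Matrix.diagonal d
      = Matrix.diagonal (fun a => ((‖d a‖ ^ 2 : ℝ) : ℂ)) := by
    rw [Matrix.diagonal_conjTranspose, Matrix.diagonal_mul_diagonal]
    refine congrArg Matrix.diagonal (funext fun a => ?_)
    simp only [Pi.star_apply]
    rw [show (star (d a)) = (starRingEnd ℂ) (d a) from rfl,
      ← Complex.normSq_eq_conj_mul_self, Complex.normSq_eq_norm_sq]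
  have h := (Matrix.posSemidef_conjTranspose_mul_self (Matrix.diagonal d)).1
  have hR : ((Matrix.diagonal d)ᴴ * Matrix.diagonal d).charpoly.roots
      = Multiset.map (fun a => ((‖d a‖ ^ 2 : ℝ) : ℂ)) Finset.univ.val := by
    rw [hD, Matrix.charpoly_diagonal, Finset.prod_eq_multiset_prod]
    have := Polynomial.roots_multiset_prod_X_sub_C
      (Multiset.map (fun a => ((‖d a‖ ^ 2 : ℝ) : ℂ)) Finset.univ.val)
    rw [Multiset.map_map] at this
    exact this
  have hE := h.roots_charpoly_eq_eigenvalues.symm.trans hR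
  have hsum : ∑ i, Real.sqrt (h.eigenvalues i) = ∑ a, ‖d a‖ := by
    have := congrArg (fun s : Multiset ℂ => (s.map (fun z : ℂ => Real.sqrt z.re)).sum) hE
    simp only [Multiset.map_map, Function.comp_apply, Complex.ofReal_re, RCLike.ofReal_re,
      RCLike.re_to_complex] at this
    rw [Finset.sum_congr rfl fun a _ => (Real.sqrt_sq (norm_nonneg (d a))).symm]
    exact this
  rw [traceNorm, Matrix.trace_mul_cycle, Unitary.coe_star_mul_self, Matrix.one_mul,
    Matrix.trace_diagonal, Complex.re_sum]
  simp only [Complex.ofReal_re]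
  exact hsum



def inn {A : Type*} [Fintype A] (χ x : A → ℂ) : ℂ := ∑ a, star (χ a) * x a

lemma inn_conj {A : Type*} [Fintype A] (χ x : A → ℂ) :
    star (inn χ x) = ∑ a, x a * star (χ a) → True := fun _ => trivial

lemma inn_sub {A : Type*} [Fintype A] (χ x y : A → ℂ) :
    inn χ (x - y) = inn χ x - inn χ y := by
  simp [inn, mul_sub, Finset.sum_sub_distrib]

lemma star_dot_outer {A : Type*} [Fintype A] (v x : A → ℂ) :
    star x ⬝ᵥ (outer v) *ᵥ x = (Complex.normSq (inn v x) : ℂ) := by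
  have h1 : (outer v) *ᵥ x = fun a => v a * inn v x := by
    funext a
    simp [outer, Matrix.mulVec, dotProduct, inn, Finset.mul_sum, mul_comm, mul_assoc,
      mul_left_comm]
  rw [h1]
  have h2 : star x ⬝ᵥ (fun a => v a * inn v x) = star (inn v x) * inn v x := by
    simp only [dotProduct, Pi.star_apply]
    rw [show star (inn v x) = ∑ a, star (x a) * v a by
      simp [inn, star_sum]; exact Finset.sum_congr rfl fun a _ => by ring, Finset.sum_mul]
    exact Finset.sum_congr rfl fun a _ => by ring
  rw [h2, show star (inn v x) = (starRingEnd ℂ) (inn v x) from rfl,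
    ← Complex.normSq_eq_conj_mul_self]

/-- The key quasi-measurement bound. -/
lemma quasi_bound {A : Type*} [Fintype A] [DecidableEq A] {s : ℕ} {η : ℝ}
    {χ : Fin s → A → ℂ}
    (hχ2 : ((η : ℂ) • (1 : Matrix A A ℂ) -
      ((Fintype.card A : ℂ) / (s : ℂ)) • ∑ i, outer (χ i)).PosSemidef)
    (x : A → ℂ) :
    ∑ i, ((Fintype.card A : ℝ) / (s : ℝ)) * Complex.normSq (inn (χ i) x)
      ≤ η * ∑ a, Complex.normSq (x a) := by
  have h := hχ2.dotProduct_mulVec_nonneg x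
  have hexp : star x ⬝ᵥ ((η : ℂ) • (1 : Matrix A A ℂ) -
      ((Fintype.card A : ℂ) / (s : ℂ)) • ∑ i, outer (χ i)) *ᵥ x
      = ((η * ∑ a, Complex.normSq (x a)
          - ∑ i, ((Fintype.card A : ℝ) / (s : ℝ)) * Complex.normSq (inn (χ i) x) : ℝ) : ℂ) := by
    rw [Matrix.sub_mulVec, dotProduct_sub]
    have e1 : star x ⬝ᵥ ((η : ℂ) • (1 : Matrix A A ℂ)) *ᵥ x
        = ((η * ∑ a, Complex.normSq (x a) : ℝ) : ℂ) := by
      rw [Matrix.smul_mulVec, dotProduct_smul, Matrix.one_mulVec, smul_eq_mul]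
      have hd : star x ⬝ᵥ x = ((∑ a, Complex.normSq (x a) : ℝ) : ℂ) := by
        simp only [dotProduct, Pi.star_apply]
        push_cast
        exact Finset.sum_congr rfl fun a _ => by
          rw [show (star (x a)) = (starRingEnd ℂ) (x a) from rfl,
            ← Complex.normSq_eq_conj_mul_self]
      rw [hd]
      push_cast
      ring
    have e2 : star x ⬝ᵥ (((Fintype.card A : ℂ) / (s : ℂ)) • ∑ i, outer (χ i)) *ᵥ x
        = ((∑ i, ((Fintype.card A : ℝ) / (s : ℝ)) * Complex.normSq (inn (χ i) x) : ℝ) : ℂ) := by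
      have hmv : (∑ i, outer (χ i)) *ᵥ x = ∑ i, (outer (χ i)) *ᵥ x := by
        funext a
        simp only [Matrix.mulVec, dotProduct, Matrix.sum_apply, Finset.sum_apply,
          Finset.sum_mul]
        exact Finset.sum_comm
      have hdp : star x ⬝ᵥ (∑ i, (outer (χ i)) *ᵥ x) = ∑ i, star x ⬝ᵥ (outer (χ i)) *ᵥ x := by
        simp only [dotProduct, Finset.sum_apply, Finset.mul_sum]
        exact Finset.sum_comm
      rw [Matrix.smul_mulVec, dotProduct_smul, hmv, hdp,
        Finset.sum_congr rfl fun i _ => star_dot_outer (χ i) x]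
      push_cast
      rw [smul_eq_mul, Finset.mul_sum]
    rw [e1, e2]
    push_cast
    ring
  rw [hexp] at h
  have := Complex.le_def.mp h
  simp only [Complex.zero_re, Complex.ofReal_re] at this
  linarith [this.1]

/-- Quadratic form bounded by operator norm. -/
lemma quadform_le_opNorm {A : Type*} [Fintype A] [DecidableEq A]
    (M : Matrix A A ℂ) (z : A → ℂ) :
    (star z ⬝ᵥ M *ᵥ z).re ≤ opNorm M * ∑ a, Complex.normSq (z a) := by
  set Z : EuclideanSpace ℂ A := (WithLp.equiv 2 _).symm z with hZ
  have h1 : (inner ℂ Z ((Matrix.toEuclideanCLM (𝕜 := ℂ) M) Z) : ℂ) = star z ⬝ᵥ M *ᵥ z := by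
    rw [dotProduct_comm]
    rfl
  have h2 : ‖Z‖ ^ 2 = ∑ a, Complex.normSq (z a) := by
    rw [EuclideanSpace.norm_eq Z, Real.sq_sqrt (Finset.sum_nonneg fun a _ => sq_nonneg _)]
    exact Finset.sum_congr rfl fun a _ => by
      rw [show Z a = z a from rfl, Complex.sq_norm]
  calc (star z ⬝ᵥ M *ᵥ z).re = (inner ℂ Z ((Matrix.toEuclideanCLM (𝕜 := ℂ) M) Z) : ℂ).re := by
        rw [h1]
    _ ≤ ‖(inner ℂ Z ((Matrix.toEuclideanCLM (𝕜 := ℂ) M) Z) : ℂ)‖ := Complex.re_le_norm _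
    _ ≤ ‖Z‖ * ‖(Matrix.toEuclideanCLM (𝕜 := ℂ) M) Z‖ := norm_inner_le_norm _ _
    _ ≤ ‖Z‖ * (‖Matrix.toEuclideanCLM (𝕜 := ℂ) M‖ * ‖Z‖) := by
        gcongr
        exact ContinuousLinearMap.le_opNorm _ _
    _ = opNorm M * ‖Z‖ ^ 2 := by rw [opNorm]; ring
    _ = opNorm M * ∑ a, Complex.normSq (z a) := by rw [h2]

/-- Expand the quadratic form of vectors of the shape `q ↦ ∑ r, W q.1 r * φ (r, q.2)`. -/
lemma app_inner_expand {B F : Type*} [Fintype B] [Fintype F]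
    (W W' : Matrix B B ℂ) (φ φ' : B × F → ℂ) :
    ∑ q : B × F, star (∑ r, W q.1 r * φ (r, q.2)) * (∑ r, W' q.1 r * φ' (r, q.2))
      = ∑ q1 : B, ∑ r : B, ∑ r' : B,
          (star (W q1 r) * W' q1 r') * ∑ f, star (φ (r, f)) * φ' (r', f) := by
  rw [Fintype.sum_prod_type]
  refine Finset.sum_congr rfl fun q1 _ => ?_
  simp only [star_sum, star_mul', Finset.sum_mul, Finset.mul_sum]
  conv_lhs => rw [Finset.sum_comm]
  conv_rhs => rw [Finset.sum_comm]
  refine Finset.sum_congr rfl fun b _ => ?_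
  conv_lhs => rw [Finset.sum_comm]
  refine Finset.sum_congr rfl fun a _ => Finset.sum_congr rfl fun f _ => by ring

end LockAux
namespace LockAux

lemma sum_rot3 {M : Type*} [AddCommMonoid M] {α β γ : Type*} [Fintype α] [Fintype β] [Fintype γ]
    (f : α → β → γ → M) :
    ∑ a, ∑ b, ∑ c, f a b c = ∑ b, ∑ c, ∑ a, f a b c := by
  rw [Finset.sum_comm]
  exact Finset.sum_congr rfl fun b _ => Finset.sum_comm

section Concrete

variable {dM dC dK dE dE' : ℕ}

/-- The pure tensor `|ψ_m⟩ ⊗ |ω⟩` as a function. -/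
def phiV (ψ : Fin dM → Fin dC × Fin dK → ℂ) (ω : Fin dE × Fin dE' → ℂ) (m : Fin dM) :
    ((Fin dC × Fin dK) × Fin dE) × Fin dE' → ℂ :=
  fun r => ψ m r.1.1 * ω (r.1.2, r.2)

lemma lockVec_eq_app (ψ : Fin dM → Fin dC × Fin dK → ℂ) (ω : Fin dE × Fin dE' → ℂ)
    (U : Matrix ((Fin dC × Fin dK) × Fin dE) ((Fin dC × Fin dK) × Fin dE) ℂ) (m : Fin dM) :
    lockVec dM dC dK dE dE' ψ ω U m
      = fun q => ∑ r, U q.1 r * phiV ψ ω m (r, q.2) := rfl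

lemma lockVec_sub (ψ : Fin dM → Fin dC × Fin dK → ℂ) (ω : Fin dE × Fin dE' → ℂ)
    (U V : Matrix ((Fin dC × Fin dK) × Fin dE) ((Fin dC × Fin dK) × Fin dE) ℂ) (m : Fin dM) :
    lockVec dM dC dK dE dE' ψ ω (U - V) m
      = lockVec dM dC dK dE dE' ψ ω U m - lockVec dM dC dK dE dE' ψ ω V m := by
  funext q
  simp [lockVec, Matrix.sub_apply, sub_mul, Finset.sum_sub_distrib]

/-- Norm of a locked vector for unitary `U`. -/
lemma lockVec_normSq_eq_one (ψ : Fin dM → Fin dC × Fin dK → ℂ) (ω : Fin dE × Fin dE' → ℂ)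
    (U : Matrix ((Fin dC × Fin dK) × Fin dE) ((Fin dC × Fin dK) × Fin dE) ℂ)
    (hU : Uᴴ * U = 1) (m : Fin dM)
    (hψm : ∑ x, star (ψ m x) * ψ m x = 1)
    (hω : ∑ q, Complex.normSq (ω q) = 1) :
    ∑ q, Complex.normSq (lockVec dM dC dK dE dE' ψ ω U m q) = 1 := by
  have key : ∑ q, (Complex.normSq (lockVec dM dC dK dE dE' ψ ω U m q) : ℂ) = 1 := by
    have h0 : ∑ q, (Complex.normSq (lockVec dM dC dK dE dE' ψ ω U m q) : ℂ)
        = ∑ q : ((Fin dC × Fin dK) × Fin dE) × Fin dE',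
            star (∑ r, U q.1 r * phiV ψ ω m (r, q.2)) * (∑ r, U q.1 r * phiV ψ ω m (r, q.2)) := by
      refine Finset.sum_congr rfl fun q _ => ?_
      rw [show (∑ r, U q.1 r * phiV ψ ω m (r, q.2)) = lockVec dM dC dK dE dE' ψ ω U m q from rfl]
      rw [show star (lockVec dM dC dK dE dE' ψ ω U m q)
        = (starRingEnd ℂ) (lockVec dM dC dK dE dE' ψ ω U m q) from rfl,
        ← Complex.normSq_eq_conj_mul_self]
    rw [h0, app_inner_expand, sum_rot3]
    have h1 : ∀ r r' : (Fin dC × Fin dK) × Fin dE,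
        ∑ q1, (star (U q1 r) * U q1 r') * (∑ f, star (phiV ψ ω m (r, f)) * phiV ψ ω m (r', f))
        = (1 : Matrix ((Fin dC × Fin dK) × Fin dE) ((Fin dC × Fin dK) × Fin dE) ℂ) r r'
          * (∑ f, star (phiV ψ ω m (r, f)) * phiV ψ ω m (r', f)) := by
      intro r r'
      rw [← Finset.sum_mul]
      congr 1
      rw [← hU]
      simp [Matrix.mul_apply, Matrix.conjTranspose_apply]
    rw [Finset.sum_congr rfl fun r _ => Finset.sum_congr rfl fun r' _ => h1 r r']
    have h2 : ∀ r : (Fin dC × Fin dK) × Fin dE,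
        ∑ r', (1 : Matrix ((Fin dC × Fin dK) × Fin dE) ((Fin dC × Fin dK) × Fin dE) ℂ) r r'
          * (∑ f, star (phiV ψ ω m (r, f)) * phiV ψ ω m (r', f))
        = ∑ f, star (phiV ψ ω m (r, f)) * phiV ψ ω m (r, f) := by
      intro r
      rw [Finset.sum_congr rfl fun r' _ => by rw [Matrix.one_apply, ite_mul, one_mul, zero_mul]]
      rw [Finset.sum_ite_eq]
      simp
    rw [Finset.sum_congr rfl fun r _ => h2 r]
    have h3 : ∑ r : (Fin dC × Fin dK) × Fin dE, ∑ f, star (phiV ψ ω m (r, f)) * phiV ψ ω m (r, f)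
        = (∑ x, star (ψ m x) * ψ m x) * ∑ q : Fin dE × Fin dE', star (ω q) * ω q := by
      rw [Fintype.sum_prod_type, Finset.sum_mul_sum]
      refine Finset.sum_congr rfl fun x _ => ?_
      rw [Fintype.sum_prod_type]
      refine Finset.sum_congr rfl fun e _ => Finset.sum_congr rfl fun f _ => ?_
      simp only [phiV, star_mul']
      ring
    rw [h3, hψm]
    have h4 : ∑ q : Fin dE × Fin dE', star (ω q) * ω q = 1 := by
      have : ∑ q : Fin dE × Fin dE', star (ω q) * ω q
          = ((∑ q : Fin dE × Fin dE', Complex.normSq (ω q) : ℝ) : ℂ) := by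
        push_cast
        exact Finset.sum_congr rfl fun q _ => by
          rw [show (star (ω q)) = (starRingEnd ℂ) (ω q) from rfl,
            ← Complex.normSq_eq_conj_mul_self]
      rw [this, hω, Complex.ofReal_one]
    rw [h4, one_mul]
  exact_mod_cast key

lemma omegaE_conj (ω : Fin dE × Fin dE' → ℂ) (e e' : Fin dE) :
    ∑ f, star (ω (e, f)) * ω (e', f) = omegaE dE dE' ω e' e := by
  simp only [omegaE, Matrix.of_apply]
  exact Finset.sum_congr rfl fun f _ => by ring

/-- Key bound: total norm of locked difference vectors via `ω^E` operator norm. -/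
lemma sum_normSq_lock_le (ψ : Fin dM → Fin dC × Fin dK → ℂ) (ω : Fin dE × Fin dE' → ℂ)
    (hcomp : ∀ x x', ∑ m, star (ψ m x) * ψ m x' = if x = x' then (1 : ℂ) else 0)
    (W : Matrix ((Fin dC × Fin dK) × Fin dE) ((Fin dC × Fin dK) × Fin dE) ℂ) :
    ∑ m, ∑ q, Complex.normSq (lockVec dM dC dK dE dE' ψ ω W m q)
      ≤ opNorm (omegaE dE dE' ω) * ∑ q1, ∑ r, Complex.normSq (W q1 r) := by
  classical
  set z : ((Fin dC × Fin dK) × Fin dE) → (Fin dC × Fin dK) → Fin dE → ℂ :=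
    fun q1 r1 e => star (W q1 (r1, e)) with hz
  have key : ((∑ m, ∑ q, Complex.normSq (lockVec dM dC dK dE dE' ψ ω W m q) : ℝ) : ℂ)
      = ∑ q1, ∑ r1 : Fin dC × Fin dK, star (z q1 r1) ⬝ᵥ (omegaE dE dE' ω) *ᵥ (z q1 r1) := by
    have h0 : ((∑ m, ∑ q, Complex.normSq (lockVec dM dC dK dE dE' ψ ω W m q) : ℝ) : ℂ)
        = ∑ m, ∑ q1, ∑ r, ∑ r',
            (star (W q1 r) * W q1 r') * ∑ f, star (phiV ψ ω m (r, f)) * phiV ψ ω m (r', f) := by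
      push_cast
      refine Finset.sum_congr rfl fun m _ => ?_
      rw [← app_inner_expand]
      refine Finset.sum_congr rfl fun q _ => ?_
      rw [show (∑ r, W q.1 r * phiV ψ ω m (r, q.2)) = lockVec dM dC dK dE dE' ψ ω W m q from rfl]
      rw [show star (lockVec dM dC dK dE dE' ψ ω W m q)
        = (starRingEnd ℂ) (lockVec dM dC dK dE dE' ψ ω W m q) from rfl,
        ← Complex.normSq_eq_conj_mul_self]
    rw [h0]
    rw [Finset.sum_comm]
    refine Finset.sum_congr rfl fun q1 _ => ?_
    rw [Finset.sum_comm]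
    have hinner : ∀ r r' : (Fin dC × Fin dK) × Fin dE,
        ∑ m, (star (W q1 r) * W q1 r')
            * ∑ f, star (phiV ψ ω m (r, f)) * phiV ψ ω m (r', f)
        = (star (W q1 r) * W q1 r')
            * ((if r.1 = r'.1 then (1 : ℂ) else 0) * ∑ f, star (ω (r.2, f)) * ω (r'.2, f)) := by
      intro r r'
      rw [← Finset.mul_sum]
      congr 1
      have : ∀ m, ∑ f, star (phiV ψ ω m (r, f)) * phiV ψ ω m (r', f)
          = (star (ψ m r.1) * ψ m r'.1) * ∑ f, star (ω (r.2, f)) * ω (r'.2, f) := by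
        intro m
        rw [Finset.mul_sum]
        refine Finset.sum_congr rfl fun f _ => ?_
        simp only [phiV, star_mul']
        ring
      rw [Finset.sum_congr rfl fun m _ => this m, ← Finset.sum_mul, hcomp]
    calc ∑ r, ∑ m, ∑ r', (star (W q1 r) * W q1 r')
            * ∑ f, star (phiV ψ ω m (r, f)) * phiV ψ ω m (r', f)
        = ∑ r, ∑ r', ∑ m, (star (W q1 r) * W q1 r')
            * ∑ f, star (phiV ψ ω m (r, f)) * phiV ψ ω m (r', f) :=
          Finset.sum_congr rfl fun r _ => Finset.sum_comm
      _ = ∑ r, ∑ r', (star (W q1 r) * W q1 r')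
            * ((if r.1 = r'.1 then (1 : ℂ) else 0) * ∑ f, star (ω (r.2, f)) * ω (r'.2, f)) :=
          Finset.sum_congr rfl fun r _ => Finset.sum_congr rfl fun r' _ => hinner r r'
      _ = ∑ r1 : Fin dC × Fin dK, star (z q1 r1) ⬝ᵥ (omegaE dE dE' ω) *ᵥ (z q1 r1) := ?_
    rw [Fintype.sum_prod_type]
    refine Finset.sum_congr rfl fun r1 _ => ?_
    have hcollapse : ∀ e : Fin dE,
        ∑ r' : (Fin dC × Fin dK) × Fin dE, (star (W q1 (r1, e)) * W q1 r')
            * ((if r1 = r'.1 then (1 : ℂ) else 0) * ∑ f, star (ω (e, f)) * ω (r'.2, f))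
        = ∑ e' : Fin dE, (star (W q1 (r1, e)) * W q1 (r1, e'))
            * ∑ f, star (ω (e, f)) * ω (e', f) := by
      intro e
      rw [Fintype.sum_prod_type]
      rw [Finset.sum_congr rfl fun r1' (_ : r1' ∈ Finset.univ) => (by
        by_cases hc : r1 = r1'
        · subst hc
          simp
        · simp only [if_neg hc, zero_mul, mul_zero, Finset.sum_const_zero]
        : ∑ e' : Fin dE, (star (W q1 (r1, e)) * W q1 (r1', e'))
            * ((if r1 = r1' then (1 : ℂ) else 0) * ∑ f, star (ω (e, f)) * ω (e', f))
          = if r1 = r1' then ∑ e' : Fin dE, (star (W q1 (r1, e)) * W q1 (r1, e'))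
              * ∑ f, star (ω (e, f)) * ω (e', f) else 0)]
      rw [Finset.sum_ite_eq]
      simp
    rw [Finset.sum_congr rfl fun e _ => hcollapse e]
    -- now compare with the quadratic form
    simp only [dotProduct, Matrix.mulVec, Pi.star_apply]
    rw [Finset.sum_comm]
    refine Finset.sum_congr rfl fun e' _ => ?_
    rw [Finset.mul_sum]
    refine Finset.sum_congr rfl fun e _ => ?_
    rw [omegaE_conj]
    simp only [hz, star_star]
    ring
  have hre := congrArg Complex.re key
  simp only [Complex.ofReal_re] at hre
  rw [hre]
  have hsum : (∑ q1, ∑ r1 : Fin dC × Fin dK,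
        star (z q1 r1) ⬝ᵥ (omegaE dE dE' ω) *ᵥ (z q1 r1)).re
      = ∑ q1, ∑ r1 : Fin dC × Fin dK,
        (star (z q1 r1) ⬝ᵥ (omegaE dE dE' ω) *ᵥ (z q1 r1)).re := by
    rw [Complex.re_sum]
    exact Finset.sum_congr rfl fun q1 _ => Complex.re_sum _ _
  rw [hsum]
  have hb : ∀ q1 r1, (star (z q1 r1) ⬝ᵥ (omegaE dE dE' ω) *ᵥ (z q1 r1)).re
      ≤ opNorm (omegaE dE dE' ω) * ∑ e, Complex.normSq (W q1 (r1, e)) := by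
    intro q1 r1
    have := quadform_le_opNorm (omegaE dE dE' ω) (z q1 r1)
    simpa [hz, Complex.normSq_conj] using this
  calc ∑ q1, ∑ r1 : Fin dC × Fin dK,
        (star (z q1 r1) ⬝ᵥ (omegaE dE dE' ω) *ᵥ (z q1 r1)).re
      ≤ ∑ q1, ∑ r1 : Fin dC × Fin dK,
          opNorm (omegaE dE dE' ω) * ∑ e, Complex.normSq (W q1 (r1, e)) :=
        Finset.sum_le_sum fun q1 _ => Finset.sum_le_sum fun r1 _ => hb q1 r1
    _ = opNorm (omegaE dE dE' ω) * ∑ q1, ∑ r, Complex.normSq (W q1 r) := by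
        rw [Finset.mul_sum]
        refine Finset.sum_congr rfl fun q1 _ => ?_
        rw [← Finset.mul_sum]
        congr 1
        conv_rhs => rw [Fintype.sum_prod_type]

/-- Slice of a vector on `(C⊗K⊗E)⊗E'` at fixed `(k,e)`, giving a vector on `C⊗E'`. -/
def sliceV (x : ((Fin dC × Fin dK) × Fin dE) × Fin dE' → ℂ) (k : Fin dK) (e : Fin dE) :
    Fin dC × Fin dE' → ℂ := fun a => x (((a.1, k), e), a.2)

lemma sliceV_sub (x y : ((Fin dC × Fin dK) × Fin dE) × Fin dE' → ℂ) (k : Fin dK) (e : Fin dE) :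
    sliceV (x - y) k e = sliceV x k e - sliceV y k e := rfl

/-- The diagonal entries produced by the quasi-measurement. -/
def GG (χv : Fin dC × Fin dE' → ℂ) (x y : ((Fin dC × Fin dK) × Fin dE) × Fin dE' → ℂ) : ℂ :=
  ∑ ke : Fin dK × Fin dE, inn χv (sliceV x ke.1 ke.2) * star (inn χv (sliceV y ke.1 ke.2))

lemma entry_identity (χv : Fin dC × Fin dE' → ℂ) (c pm : ℂ)
    (x y : ((Fin dC × Fin dK) × Fin dE) × Fin dE' → ℂ) :
    ∑ a : Fin dC × Fin dE', ∑ a' : Fin dC × Fin dE',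
        (c * (χv a * star (χv a'))) * (pm * ∑ ke : Fin dK × Fin dE,
          sliceV x ke.1 ke.2 a' * star (sliceV y ke.1 ke.2 a))
      = c * (pm * GG χv x y) := by
  unfold GG inn
  conv_rhs => rw [Finset.mul_sum, Finset.mul_sum]
  simp only [Finset.mul_sum]
  rw [sum_rot3, sum_rot3]
  refine Finset.sum_congr rfl fun ke _ => ?_
  simp only [star_sum, star_mul', star_star]
  rw [Finset.sum_mul_sum]
  simp only [Finset.mul_sum]
  rw [Finset.sum_comm]
  refine Finset.sum_congr rfl fun a' _ => Finset.sum_congr rfl fun a _ => by ring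

lemma entry_identity2 {J : Type*} [Fintype J] (χv : Fin dC × Fin dE' → ℂ) (c pm : ℂ)
    (w : J → ℂ) (x y : J → ((Fin dC × Fin dK) × Fin dE) × Fin dE' → ℂ) :
    ∑ a : Fin dC × Fin dE', ∑ a' : Fin dC × Fin dE',
        (c * (χv a * star (χv a'))) * (pm * ∑ j, w j * ∑ ke : Fin dK × Fin dE,
          sliceV (x j) ke.1 ke.2 a' * star (sliceV (y j) ke.1 ke.2 a))
      = c * (pm * ∑ j, w j * GG χv (x j) (y j)) := by
  unfold GG inn
  conv_rhs => rw [Finset.mul_sum, Finset.mul_sum]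
  simp only [Finset.mul_sum]
  rw [sum_rot3, sum_rot3]
  refine Finset.sum_congr rfl fun j _ => ?_
  rw [sum_rot3, sum_rot3]
  refine Finset.sum_congr rfl fun ke _ => ?_
  simp only [star_sum, star_mul', star_star]
  rw [Finset.sum_mul_sum]
  simp only [Finset.mul_sum]
  rw [Finset.sum_comm]
  refine Finset.sum_congr rfl fun a' _ => Finset.sum_congr rfl fun a _ => by ring

variable {s : ℕ}

lemma measApply_rhoMCE'_eq (χ : Fin s → Fin dC × Fin dE' → ℂ)
    (p : Fin dM → ℝ) (ψ : Fin dM → Fin dC × Fin dK → ℂ) (ω : Fin dE × Fin dE' → ℂ)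
    (U : Matrix ((Fin dC × Fin dK) × Fin dE) ((Fin dC × Fin dK) × Fin dE) ℂ) :
    measApply (quasiKernel s χ) (rhoMCE' dM dC dK dE dE' p ψ ω U)
      = Matrix.diagonal (fun mi : Fin dM × Fin s =>
          ((Fintype.card (Fin dC × Fin dE') : ℂ) / (s : ℂ)) * ((p mi.1 : ℂ)
            * GG (χ mi.2) (lockVec dM dC dK dE dE' ψ ω U mi.1)
                (lockVec dM dC dK dE dE' ψ ω U mi.1))) := by
  ext x y
  obtain ⟨m, i⟩ := x
  obtain ⟨m', i'⟩ := y
  show (if i = i' then _ else 0) = _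
  by_cases hii : i = i'
  · subst hii
    by_cases hmm : m = m'
    · subst hmm
      rw [if_pos rfl, Matrix.diagonal_apply_eq]
      have hterm : ∀ a a' : Fin dC × Fin dE',
          quasiKernel s χ i a a' * rhoMCE' dM dC dK dE dE' p ψ ω U (m, a') (m, a)
          = (((Fintype.card (Fin dC × Fin dE') : ℂ) / (s : ℂ)) * (χ i a * star (χ i a')))
            * ((p m : ℂ) * ∑ ke : Fin dK × Fin dE,
                sliceV (lockVec dM dC dK dE dE' ψ ω U m) ke.1 ke.2 a'
                  * star (sliceV (lockVec dM dC dK dE dE' ψ ω U m) ke.1 ke.2 a)) := by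
        intro a a'
        show (((Fintype.card (Fin dC × Fin dE') : ℂ) / (s : ℂ)) • outer (χ i)) a a'
            * ((if m = m then (p m : ℂ) else 0) * _) = _
        rw [Matrix.smul_apply, if_pos rfl]
        conv_rhs => rw [Fintype.sum_prod_type]
        rfl
      rw [Finset.sum_congr rfl fun a (_ : a ∈ Finset.univ) =>
        Finset.sum_congr rfl fun a' (_ : a' ∈ Finset.univ) => hterm a a']
      exact entry_identity (χ i) _ _ _ _
    · rw [if_pos rfl]
      have hz : ∀ a a' : Fin dC × Fin dE',
          quasiKernel s χ i a a' * rhoMCE' dM dC dK dE dE' p ψ ω U (m, a') (m', a) = 0 := by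
        intro a a'
        show _ * ((if m = m' then (p m : ℂ) else 0) * _) = 0
        rw [if_neg hmm, zero_mul, mul_zero]
      rw [Finset.sum_congr rfl fun a (_ : a ∈ Finset.univ) =>
        Finset.sum_congr rfl fun a' (_ : a' ∈ Finset.univ) => hz a a']
      rw [Matrix.diagonal_apply_ne _ (by simp [hmm])]
      simp
  · rw [if_neg hii, Matrix.diagonal_apply_ne _ (by simp [hii])]

lemma measApply_kron_eq (χ : Fin s → Fin dC × Fin dE' → ℂ)
    (p : Fin dM → ℝ) (ψ : Fin dM → Fin dC × Fin dK → ℂ) (ω : Fin dE × Fin dE' → ℂ)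
    (U : Matrix ((Fin dC × Fin dK) × Fin dE) ((Fin dC × Fin dK) × Fin dE) ℂ) :
    measApply (quasiKernel s χ) (rhoM dM p ⊗ₖ rhoCE' dM dC dK dE dE' p ψ ω U)
      = Matrix.diagonal (fun mi : Fin dM × Fin s =>
          ((Fintype.card (Fin dC × Fin dE') : ℂ) / (s : ℂ)) * ((p mi.1 : ℂ)
            * ∑ m'', (p m'' : ℂ) * GG (χ mi.2) (lockVec dM dC dK dE dE' ψ ω U m'')
                (lockVec dM dC dK dE dE' ψ ω U m''))) := by
  ext x y
  obtain ⟨m, i⟩ := x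
  obtain ⟨m', i'⟩ := y
  show (if i = i' then _ else 0) = _
  by_cases hii : i = i'
  · subst hii
    by_cases hmm : m = m'
    · subst hmm
      rw [if_pos rfl, Matrix.diagonal_apply_eq]
      have hterm : ∀ a a' : Fin dC × Fin dE',
          quasiKernel s χ i a a'
              * (rhoM dM p ⊗ₖ rhoCE' dM dC dK dE dE' p ψ ω U) (m, a') (m, a)
          = (((Fintype.card (Fin dC × Fin dE') : ℂ) / (s : ℂ)) * (χ i a * star (χ i a')))
            * ((p m : ℂ) * ∑ m'', (p m'' : ℂ) * ∑ ke : Fin dK × Fin dE,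
                sliceV (lockVec dM dC dK dE dE' ψ ω U m'') ke.1 ke.2 a'
                  * star (sliceV (lockVec dM dC dK dE dE' ψ ω U m'') ke.1 ke.2 a)) := by
        intro a a'
        rw [Matrix.kroneckerMap_apply]
        show (((Fintype.card (Fin dC × Fin dE') : ℂ) / (s : ℂ)) • outer (χ i)) a a'
            * ((Matrix.diagonal (fun m => (p m : ℂ))) m m
              * ∑ m'', (if m'' = m'' then (p m'' : ℂ) else 0)
                  * ∑ k, ∑ e, lockVec dM dC dK dE dE' ψ ω U m'' (((a'.1, k), e), a'.2)
                    * star (lockVec dM dC dK dE dE' ψ ω U m'' (((a.1, k), e), a.2))) = _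
        rw [Matrix.smul_apply, Matrix.diagonal_apply_eq]
        rw [Finset.sum_congr rfl fun m'' (_ : m'' ∈ Finset.univ) => (by
          rw [if_pos rfl]
          congr 1
          rw [Fintype.sum_prod_type]
          rfl
          : (if m'' = m'' then (p m'' : ℂ) else 0)
              * ∑ k, ∑ e, lockVec dM dC dK dE dE' ψ ω U m'' (((a'.1, k), e), a'.2)
                * star (lockVec dM dC dK dE dE' ψ ω U m'' (((a.1, k), e), a.2))
            = (p m'' : ℂ) * ∑ ke : Fin dK × Fin dE,
                sliceV (lockVec dM dC dK dE dE' ψ ω U m'') ke.1 ke.2 a'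
                  * star (sliceV (lockVec dM dC dK dE dE' ψ ω U m'') ke.1 ke.2 a))]
        rfl
      rw [Finset.sum_congr rfl fun a (_ : a ∈ Finset.univ) =>
        Finset.sum_congr rfl fun a' (_ : a' ∈ Finset.univ) => hterm a a']
      exact entry_identity2 (χ i) _ _ _ _ _
    · rw [if_pos rfl]
      have hz : ∀ a a' : Fin dC × Fin dE',
          quasiKernel s χ i a a'
              * (rhoM dM p ⊗ₖ rhoCE' dM dC dK dE dE' p ψ ω U) (m, a') (m', a) = 0 := by
        intro a a'
        rw [Matrix.kroneckerMap_apply]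
        show _ * ((Matrix.diagonal (fun m => (p m : ℂ))) m m' * _) = 0
        rw [Matrix.diagonal_apply_ne _ hmm, zero_mul, mul_zero]
      rw [Finset.sum_congr rfl fun a (_ : a ∈ Finset.univ) =>
        Finset.sum_congr rfl fun a' (_ : a' ∈ Finset.univ) => hz a a']
      rw [Matrix.diagonal_apply_ne _ (by simp [hmm])]
      simp
  · rw [if_neg hii, Matrix.diagonal_apply_ne _ (by simp [hii])]

lemma GG_sub_split (χv : Fin dC × Fin dE' → ℂ)
    (x y : ((Fin dC × Fin dK) × Fin dE) × Fin dE' → ℂ) :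
    GG χv x x - GG χv y y = GG χv x (x - y) + GG χv (x - y) y := by
  unfold GG
  rw [← Finset.sum_sub_distrib, ← Finset.sum_add_distrib]
  refine Finset.sum_congr rfl fun ke _ => ?_
  rw [sliceV_sub, inn_sub, star_sub]
  ring

lemma slice_normSq_total (x : ((Fin dC × Fin dK) × Fin dE) × Fin dE' → ℂ) :
    ∑ ke : Fin dK × Fin dE, ∑ a : Fin dC × Fin dE', Complex.normSq (sliceV x ke.1 ke.2 a)
      = ∑ q, Complex.normSq (x q) := by
  simp only [Fintype.sum_prod_type]
  rw [sum_rot3, sum_rot3]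
  rfl

/-- The workhorse bound: `∑_i c·|GG(χ_i,x,y)| ≤ η‖x‖‖y‖`. -/
lemma GG_abs_bound {η : ℝ} (hη : 0 ≤ η) (χ : Fin s → Fin dC × Fin dE' → ℂ)
    (hχ2 : ((η : ℂ) • (1 : Matrix (Fin dC × Fin dE') (Fin dC × Fin dE') ℂ) -
      ((Fintype.card (Fin dC × Fin dE') : ℂ) / (s : ℂ)) • ∑ i, outer (χ i)).PosSemidef)
    (x y : ((Fin dC × Fin dK) × Fin dE) × Fin dE' → ℂ) :
    ∑ i, ((Fintype.card (Fin dC × Fin dE') : ℝ) / (s : ℝ)) * ‖GG (χ i) x y‖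
      ≤ η * (Real.sqrt (∑ q, Complex.normSq (x q)) * Real.sqrt (∑ q, Complex.normSq (y q))) := by
  set cR := ((Fintype.card (Fin dC × Fin dE') : ℝ) / (s : ℝ)) with hcR
  have hcR0 : (0 : ℝ) ≤ cR := by positivity
  set Sx : Fin dK × Fin dE → ℝ := fun ke => ∑ a, Complex.normSq (sliceV x ke.1 ke.2 a) with hSx
  set Sy : Fin dK × Fin dE → ℝ := fun ke => ∑ a, Complex.normSq (sliceV y ke.1 ke.2 a) with hSy
  have hSx0 : ∀ ke, 0 ≤ Sx ke := fun ke => Finset.sum_nonneg fun a _ => Complex.normSq_nonneg _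
  have hSy0 : ∀ ke, 0 ≤ Sy ke := fun ke => Finset.sum_nonneg fun a _ => Complex.normSq_nonneg _
  have h1 : ∀ i, cR * ‖GG (χ i) x y‖
      ≤ ∑ ke : Fin dK × Fin dE,
          (Real.sqrt cR * ‖inn (χ i) (sliceV x ke.1 ke.2)‖)
          * (Real.sqrt cR * ‖inn (χ i) (sliceV y ke.1 ke.2)‖) := by
    intro i
    have habs : ‖GG (χ i) x y‖ ≤ ∑ ke : Fin dK × Fin dE,
        ‖inn (χ i) (sliceV x ke.1 ke.2)‖
          * ‖inn (χ i) (sliceV y ke.1 ke.2)‖ := by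
      refine (norm_sum_le _ _).trans (le_of_eq ?_)
      refine Finset.sum_congr rfl fun ke _ => ?_
      rw [norm_mul,
        show (star (inn (χ i) (sliceV y ke.1 ke.2)))
          = (starRingEnd ℂ) (inn (χ i) (sliceV y ke.1 ke.2)) from rfl, Complex.norm_conj]
    calc cR * ‖GG (χ i) x y‖
        ≤ cR * ∑ ke : Fin dK × Fin dE,
            ‖inn (χ i) (sliceV x ke.1 ke.2)‖
              * ‖inn (χ i) (sliceV y ke.1 ke.2)‖ :=
          mul_le_mul_of_nonneg_left habs hcR0
      _ = ∑ ke : Fin dK × Fin dE,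
            (Real.sqrt cR * ‖inn (χ i) (sliceV x ke.1 ke.2)‖)
            * (Real.sqrt cR * ‖inn (χ i) (sliceV y ke.1 ke.2)‖) := by
          rw [Finset.mul_sum]
          refine Finset.sum_congr rfl fun ke _ => ?_
          conv_lhs => rw [show cR = Real.sqrt cR * Real.sqrt cR
            from (Real.mul_self_sqrt hcR0).symm]
          ring
  have h3 : ∀ ke : Fin dK × Fin dE,
      ∑ i, (Real.sqrt cR * ‖inn (χ i) (sliceV x ke.1 ke.2)‖)
          * (Real.sqrt cR * ‖inn (χ i) (sliceV y ke.1 ke.2)‖)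
      ≤ η * (Real.sqrt (Sx ke) * Real.sqrt (Sy ke)) := by
    intro ke
    have hsq : ∀ (w : Fin dC × Fin dE' → ℂ) i,
        (Real.sqrt cR * ‖inn (χ i) w‖) ^ 2 = cR * Complex.normSq (inn (χ i) w) := by
      intro w i
      rw [mul_pow, Real.sq_sqrt hcR0, Complex.sq_norm]
    have hqx := quasi_bound hχ2 (sliceV x ke.1 ke.2)
    have hqy := quasi_bound hχ2 (sliceV y ke.1 ke.2)
    calc ∑ i, (Real.sqrt cR * ‖inn (χ i) (sliceV x ke.1 ke.2)‖)
          * (Real.sqrt cR * ‖inn (χ i) (sliceV y ke.1 ke.2)‖)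
        ≤ Real.sqrt (∑ i, (Real.sqrt cR * ‖inn (χ i) (sliceV x ke.1 ke.2)‖) ^ 2)
          * Real.sqrt (∑ i, (Real.sqrt cR * ‖inn (χ i) (sliceV y ke.1 ke.2)‖) ^ 2) :=
          sum_le_sqrt_mul_sqrt _ _ _ (fun i _ => by positivity) (fun i _ => by positivity)
      _ ≤ Real.sqrt (η * Sx ke) * Real.sqrt (η * Sy ke) := by
          gcongr
          · rw [Finset.sum_congr rfl fun i _ => hsq (sliceV x ke.1 ke.2) i]
            exact hqx
          · rw [Finset.sum_congr rfl fun i _ => hsq (sliceV y ke.1 ke.2) i]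
            exact hqy
      _ = η * (Real.sqrt (Sx ke) * Real.sqrt (Sy ke)) := by
          rw [Real.sqrt_mul hη, Real.sqrt_mul hη]
          rw [show Real.sqrt η * Real.sqrt (Sx ke) * (Real.sqrt η * Real.sqrt (Sy ke))
            = (Real.sqrt η * Real.sqrt η) * (Real.sqrt (Sx ke) * Real.sqrt (Sy ke)) by ring]
          rw [Real.mul_self_sqrt hη]
  calc ∑ i, cR * ‖GG (χ i) x y‖
      ≤ ∑ i, ∑ ke : Fin dK × Fin dE,
          (Real.sqrt cR * ‖inn (χ i) (sliceV x ke.1 ke.2)‖)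
          * (Real.sqrt cR * ‖inn (χ i) (sliceV y ke.1 ke.2)‖) :=
        Finset.sum_le_sum fun i _ => h1 i
    _ = ∑ ke : Fin dK × Fin dE, ∑ i,
          (Real.sqrt cR * ‖inn (χ i) (sliceV x ke.1 ke.2)‖)
          * (Real.sqrt cR * ‖inn (χ i) (sliceV y ke.1 ke.2)‖) := Finset.sum_comm
    _ ≤ ∑ ke : Fin dK × Fin dE, η * (Real.sqrt (Sx ke) * Real.sqrt (Sy ke)) :=
        Finset.sum_le_sum fun ke _ => h3 ke
    _ = η * ∑ ke : Fin dK × Fin dE, Real.sqrt (Sx ke) * Real.sqrt (Sy ke) := by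
        rw [Finset.mul_sum]
    _ ≤ η * (Real.sqrt (∑ ke, Real.sqrt (Sx ke) ^ 2) * Real.sqrt (∑ ke, Real.sqrt (Sy ke) ^ 2)) := by
        refine mul_le_mul_of_nonneg_left ?_ hη
        exact sum_le_sqrt_mul_sqrt _ _ _ (fun ke _ => Real.sqrt_nonneg _)
          (fun ke _ => Real.sqrt_nonneg _)
    _ = η * (Real.sqrt (∑ q, Complex.normSq (x q)) * Real.sqrt (∑ q, Complex.normSq (y q))) := by
        rw [Finset.sum_congr rfl fun ke _ => Real.sq_sqrt (hSx0 ke),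
          Finset.sum_congr rfl fun ke _ => Real.sq_sqrt (hSy0 ke)]
        rw [hSx, hSy]
        rw [slice_normSq_total, slice_normSq_total]

lemma frobNorm_eq {B : Type*} [Fintype B] (W : Matrix B B ℂ) :
    frobNorm W = Real.sqrt (∑ q1, ∑ r, Complex.normSq (W q1 r)) := by
  unfold frobNorm
  congr 1
  have htr : (Wᴴ * W).trace = ((∑ q1, ∑ r, Complex.normSq (W q1 r) : ℝ) : ℂ) := by
    rw [Matrix.trace]
    push_cast
    simp only [Matrix.diag_apply, Matrix.mul_apply, Matrix.conjTranspose_apply]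
    rw [Finset.sum_comm]
    refine Finset.sum_congr rfl fun q1 _ => Finset.sum_congr rfl fun r _ => ?_
    rw [show (star (W q1 r)) = (starRingEnd ℂ) (W q1 r) from rfl,
      ← Complex.normSq_eq_conj_mul_self]
  rw [htr, Complex.ofReal_re]

end Concrete

end LockAux

open LockAux in
/-- `g_𝓜(U)` is Lipschitz with constant `4η√(Δ_{M,∞}Δ_{E,∞}/(|M||E|))` in the
Frobenius distance on unitaries. -/
theorem lipschitz_in_unitary_for_fixed_quasi_measurement
    (dM dC dK dE dE' : ℕ) (hdim : dM = dC * dK)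
    (p : Fin dM → ℝ) (hp0 : ∀ m, 0 ≤ p m) (hp1 : ∑ m, p m = 1)
    (ψ : Fin dM → Fin dC × Fin dK → ℂ)
    (hψ : ∀ m m', ∑ x, star (ψ m x) * ψ m' x = if m = m' then 1 else 0)
    (ω : Fin dE × Fin dE' → ℂ) (hω : ∑ q, Complex.normSq (ω q) = 1)
    (s : ℕ) (hs : 1 ≤ s) (η : ℝ) (hη : 0 < η)
    (χ : Fin s → Fin dC × Fin dE' → ℂ) (hχ : IsQuasiTuple s η χ)
    (U V : Matrix.unitaryGroup ((Fin dC × Fin dK) × Fin dE) ℂ) :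
    (|traceNorm (measApply (quasiKernel s χ) (rhoMCE' dM dC dK dE dE' p ψ ω (U : Matrix _ _ ℂ))
          - measApply (quasiKernel s χ)
              (rhoM dM p ⊗ₖ rhoCE' dM dC dK dE dE' p ψ ω (U : Matrix _ _ ℂ)))
      - traceNorm (measApply (quasiKernel s χ) (rhoMCE' dM dC dK dE dE' p ψ ω (V : Matrix _ _ ℂ))
          - measApply (quasiKernel s χ)
              (rhoM dM p ⊗ₖ rhoCE' dM dC dK dE dE' p ψ ω (V : Matrix _ _ ℂ)))|
      ≤ 4 * η * Real.sqrt ((⨆ m : Fin dM, p m) * opNorm (omegaE dE dE' ω)) *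
          frobNorm ((U : Matrix ((Fin dC × Fin dK) × Fin dE) ((Fin dC × Fin dK) × Fin dE) ℂ)
            - (V : Matrix ((Fin dC × Fin dK) × Fin dE) ((Fin dC × Fin dK) × Fin dE) ℂ)))
    ∧ 4 * η * Real.sqrt ((⨆ m : Fin dM, p m) * opNorm (omegaE dE dE' ω))
      = 4 * η * Real.sqrt (((dM : ℝ) * (⨆ m : Fin dM, p m)) * ((dE : ℝ) * opNorm (omegaE dE dE' ω))
          / ((dM : ℝ) * (dE : ℝ))) := by
  classical
  obtain ⟨hχ1, hχ2⟩ := hχ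
  have hdM : dM ≠ 0 := by rintro rfl; simpa using hp1
  have hdE : dE ≠ 0 := by
    rintro rfl
    have : IsEmpty (Fin 0 × Fin dE') := by infer_instance
    simp at hω
  haveI : Nonempty (Fin dM) := Fin.pos_iff_nonempty.mp (Nat.pos_of_ne_zero hdM)
  have hple : ∀ m, p m ≤ ⨆ m : Fin dM, p m :=
    fun m => le_ciSup (Set.Finite.bddAbove (Set.finite_range p)) m
  have hmax0 : 0 ≤ ⨆ m : Fin dM, p m := (hp0 (Classical.arbitrary _)).trans (hple _)
  have hop0 : 0 ≤ opNorm (omegaE dE dE' ω) := norm_nonneg _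
  constructor
  swap
  · congr 2
    have h1 : (dM : ℝ) ≠ 0 := Nat.cast_ne_zero.mpr hdM
    have h2 : (dE : ℝ) ≠ 0 := Nat.cast_ne_zero.mpr hdE
    field_simp
  -- unitarity
  have hUu : (U : Matrix ((Fin dC × Fin dK) × Fin dE) ((Fin dC × Fin dK) × Fin dE) ℂ)ᴴ
      * (U : Matrix _ _ ℂ) = 1 := by
    have := Unitary.star_mul_self_of_mem U.2
    rwa [Matrix.star_eq_conjTranspose] at this
  have hVu : (V : Matrix ((Fin dC × Fin dK) × Fin dE) ((Fin dC × Fin dK) × Fin dE) ℂ)ᴴ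
      * (V : Matrix _ _ ℂ) = 1 := by
    have := Unitary.star_mul_self_of_mem V.2
    rwa [Matrix.star_eq_conjTranspose] at this
  -- completeness of ψ
  have hcomp : ∀ x x', ∑ m, star (ψ m x) * ψ m x' = if x = x' then (1 : ℂ) else 0 := by
    have hBB : Matrix.of ψ * (Matrix.of ψ)ᴴ = 1 := by
      ext m m'
      rw [Matrix.mul_apply, Matrix.one_apply]
      have h := congrArg star (hψ m m')
      rw [star_sum] at h
      simp only [star_mul', star_star] at h
      calc ∑ x, Matrix.of ψ m x * (Matrix.of ψ)ᴴ x m'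
          = ∑ x, ψ m x * star (ψ m' x) := by
            refine Finset.sum_congr rfl fun x _ => ?_
            rw [Matrix.conjTranspose_apply, Matrix.of_apply, Matrix.of_apply]
        _ = if m = m' then 1 else 0 := by
            rw [h]
            by_cases hmm : m = m' <;> simp [hmm]
    have hcard : Fintype.card (Fin dM) = Fintype.card (Fin dC × Fin dK) := by
      simp [hdim]
    have h2 : (Matrix.of ψ)ᴴ * Matrix.of ψ = 1 :=
      (Matrix.mul_eq_one_comm_of_equiv (Fintype.equivOfCardEq hcard)).mp hBB
    intro x x'
    have h3 : ((Matrix.of ψ)ᴴ * Matrix.of ψ) x x' = (1 : Matrix _ _ ℂ) x x' := by rw [h2]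
    rw [Matrix.mul_apply, Matrix.one_apply] at h3
    simpa only [Matrix.conjTranspose_apply, Matrix.of_apply] using h3
  -- notation
  set W := (U : Matrix ((Fin dC × Fin dK) × Fin dE) ((Fin dC × Fin dK) × Fin dE) ℂ)
      - (V : Matrix ((Fin dC × Fin dK) × Fin dE) ((Fin dC × Fin dK) × Fin dE) ℂ) with hW
  set u := lockVec dM dC dK dE dE' ψ ω (U : Matrix _ _ ℂ) with hu
  set v := lockVec dM dC dK dE dE' ψ ω (V : Matrix _ _ ℂ) with hv
  set dd := lockVec dM dC dK dE dE' ψ ω W with hdd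
  have hdsub : ∀ m, dd m = u m - v m := by
    intro m
    rw [hdd, hW, lockVec_sub, hu, hv]
  set cC : ℂ := (Fintype.card (Fin dC × Fin dE') : ℂ) / (s : ℂ) with hcC
  set cR : ℝ := ((Fintype.card (Fin dC × Fin dE') : ℝ) / (s : ℝ)) with hcRdef
  have hcR0 : 0 ≤ cR := by positivity
  have hcCR : cC = (cR : ℂ) := by rw [hcC, hcRdef]; push_cast; ring
  set Δ : Fin dM → Fin s → ℂ :=
    fun m i => GG (χ i) (u m) (u m) - GG (χ i) (v m) (v m) with hΔ
  set Nd : Fin dM → ℝ := fun m => Real.sqrt (∑ q, Complex.normSq (dd m q)) with hNd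
  have hNd0 : ∀ m, 0 ≤ Nd m := fun m => Real.sqrt_nonneg _
  -- the diagonal forms
  have hgW : ∀ (X : Matrix ((Fin dC × Fin dK) × Fin dE) ((Fin dC × Fin dK) × Fin dE) ℂ),
      traceNorm (measApply (quasiKernel s χ) (rhoMCE' dM dC dK dE dE' p ψ ω X)
          - measApply (quasiKernel s χ) (rhoM dM p ⊗ₖ rhoCE' dM dC dK dE dE' p ψ ω X))
        = ∑ mi : Fin dM × Fin s, ‖cC * ((p mi.1 : ℂ)
            * (GG (χ mi.2) (lockVec dM dC dK dE dE' ψ ω X mi.1)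
                  (lockVec dM dC dK dE dE' ψ ω X mi.1)
              - ∑ m'', (p m'' : ℂ) * GG (χ mi.2) (lockVec dM dC dK dE dE' ψ ω X m'')
                  (lockVec dM dC dK dE dE' ψ ω X m'')))‖ := by
    intro X
    rw [measApply_rhoMCE'_eq, measApply_kron_eq, Matrix.diagonal_sub, traceNorm_diagonal]
    refine Finset.sum_congr rfl fun mi _ => ?_
    congr 1
    rw [← hcC]
    ring
  rw [hgW, hgW]
  set DU : Fin dM × Fin s → ℂ := fun mi => cC * ((p mi.1 : ℂ)
    * (GG (χ mi.2) (u mi.1) (u mi.1)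
        - ∑ m'', (p m'' : ℂ) * GG (χ mi.2) (u m'') (u m''))) with hDU
  set DV : Fin dM × Fin s → ℂ := fun mi => cC * ((p mi.1 : ℂ)
    * (GG (χ mi.2) (v mi.1) (v mi.1)
        - ∑ m'', (p m'' : ℂ) * GG (χ mi.2) (v m'') (v m''))) with hDV
  -- step 1 : reduce to entrywise differences
  have habs1 : |∑ mi : Fin dM × Fin s, ‖DU mi‖
        - ∑ mi : Fin dM × Fin s, ‖DV mi‖|
      ≤ ∑ mi : Fin dM × Fin s, ‖DU mi - DV mi‖ := by
    rw [← Finset.sum_sub_distrib]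
    refine (Finset.abs_sum_le_sum_abs _ _).trans ?_
    exact Finset.sum_le_sum fun mi _ => abs_norm_sub_norm_le _ _
  -- step 2 : entrywise difference formula
  have hDdiff : ∀ m i, DU (m, i) - DV (m, i)
      = cC * ((p m : ℂ) * (Δ m i - ∑ m'', (p m'' : ℂ) * Δ m'' i)) := by
    intro m i
    have hS : (∑ m'', (p m'' : ℂ) * GG (χ i) (u m'') (u m''))
          - (∑ m'', (p m'' : ℂ) * GG (χ i) (v m'') (v m''))
        = ∑ m'', (p m'' : ℂ) * Δ m'' i := by
      rw [← Finset.sum_sub_distrib]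
      exact Finset.sum_congr rfl fun m'' _ => by rw [hΔ]; ring
    rw [hDU, hDV]
    simp only
    rw [← hS]
    ring
  -- step 3 : entrywise bound
  have habs2 : ∀ m i, ‖DU (m, i) - DV (m, i)‖
      ≤ cR * (p m * (‖Δ m i‖ + ∑ m'', p m'' * ‖Δ m'' i‖)) := by
    intro m i
    rw [hDdiff m i, hcCR, norm_mul, norm_mul,
      Complex.norm_real, Complex.norm_real, Real.norm_of_nonneg hcR0, Real.norm_of_nonneg (hp0 m)]
    refine mul_le_mul_of_nonneg_left (mul_le_mul_of_nonneg_left ?_ (hp0 m)) hcR0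
    calc ‖Δ m i - ∑ m'', (p m'' : ℂ) * Δ m'' i‖
        ≤ ‖Δ m i‖ + ‖∑ m'', (p m'' : ℂ) * Δ m'' i‖ := by
          have := norm_add_le (Δ m i) (-(∑ m'', (p m'' : ℂ) * Δ m'' i))
          simpa [sub_eq_add_neg] using this
      _ ≤ ‖Δ m i‖ + ∑ m'', p m'' * ‖Δ m'' i‖ := by
          gcongr
          refine (norm_sum_le _ _).trans (le_of_eq ?_)
          refine Finset.sum_congr rfl fun m'' _ => ?_
          rw [norm_mul, Complex.norm_real, Real.norm_of_nonneg (hp0 m'')]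
  -- the per-row sums
  set A : Fin dM → ℝ := fun m => ∑ i, cR * ‖Δ m i‖ with hA
  have hA0 : ∀ m, 0 ≤ A m := fun m =>
    Finset.sum_nonneg fun i _ => mul_nonneg hcR0 (norm_nonneg _)
  -- step D : A m ≤ 2 η Nd m
  have hNu : ∀ m, Real.sqrt (∑ q, Complex.normSq (u m q)) = 1 := by
    intro m
    rw [hu, lockVec_normSq_eq_one ψ ω _ hUu m (by simpa using hψ m m) hω, Real.sqrt_one]
  have hNv : ∀ m, Real.sqrt (∑ q, Complex.normSq (v m q)) = 1 := by
    intro m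
    rw [hv, lockVec_normSq_eq_one ψ ω _ hVu m (by simpa using hψ m m) hω, Real.sqrt_one]
  have hAbound : ∀ m, A m ≤ 2 * η * Nd m := by
    intro m
    have hsplit : ∀ i, Δ m i = GG (χ i) (u m) (dd m) + GG (χ i) (dd m) (v m) := by
      intro i
      rw [hΔ]
      simp only
      rw [hdsub m]
      exact GG_sub_split (χ i) (u m) (v m)
    calc A m = ∑ i, cR * ‖GG (χ i) (u m) (dd m) + GG (χ i) (dd m) (v m)‖ := by
          rw [hA]
          exact Finset.sum_congr rfl fun i _ => by rw [hsplit i]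
      _ ≤ ∑ i, (cR * ‖GG (χ i) (u m) (dd m)‖
            + cR * ‖GG (χ i) (dd m) (v m)‖) := by
          refine Finset.sum_le_sum fun i _ => ?_
          rw [← mul_add]
          exact mul_le_mul_of_nonneg_left (norm_add_le _ _) hcR0
      _ = (∑ i, cR * ‖GG (χ i) (u m) (dd m)‖)
            + ∑ i, cR * ‖GG (χ i) (dd m) (v m)‖ := Finset.sum_add_distrib
      _ ≤ η * (Real.sqrt (∑ q, Complex.normSq (u m q)) * Real.sqrt (∑ q, Complex.normSq (dd m q)))
          + η * (Real.sqrt (∑ q, Complex.normSq (dd m q))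
              * Real.sqrt (∑ q, Complex.normSq (v m q))) :=
          add_le_add (GG_abs_bound hη.le χ hχ2 (u m) (dd m)) (GG_abs_bound hη.le χ hχ2 (dd m) (v m))
      _ = 2 * η * Nd m := by
          rw [hNu m, hNv m, hNd]
          simp only
          ring
  -- step 6 : total bound
  have hsum2 : ∑ mi : Fin dM × Fin s, ‖DU mi - DV mi‖
      ≤ 2 * ∑ m, p m * A m := by
    calc ∑ mi : Fin dM × Fin s, ‖DU mi - DV mi‖
        = ∑ m, ∑ i, ‖DU (m, i) - DV (m, i)‖ := Fintype.sum_prod_type _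
      _ ≤ ∑ m, ∑ i, cR * (p m * (‖Δ m i‖
            + ∑ m'', p m'' * ‖Δ m'' i‖)) :=
          Finset.sum_le_sum fun m _ => Finset.sum_le_sum fun i _ => habs2 m i
      _ = ∑ m, p m * (A m + ∑ m'', p m'' * A m'') := by
          refine Finset.sum_congr rfl fun m _ => ?_
          have e1 : ∑ i, cR * (p m * ‖Δ m i‖) = p m * A m := by
            rw [hA]
            simp only
            rw [Finset.mul_sum]
            exact Finset.sum_congr rfl fun i _ => by ring
          have e2 : ∑ i, cR * (p m * ∑ m'', p m'' * ‖Δ m'' i‖)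
              = p m * ∑ m'', p m'' * A m'' := by
            simp only [Finset.mul_sum]
            rw [Finset.sum_comm]
            refine Finset.sum_congr rfl fun m'' _ => ?_
            rw [hA]
            simp only
            rw [Finset.mul_sum, Finset.mul_sum]
            exact Finset.sum_congr rfl fun i _ => by ring
          calc ∑ i, cR * (p m * (‖Δ m i‖ + ∑ m'', p m'' * ‖Δ m'' i‖))
              = ∑ i, (cR * (p m * ‖Δ m i‖)
                  + cR * (p m * ∑ m'', p m'' * ‖Δ m'' i‖)) :=
                Finset.sum_congr rfl fun i _ => by ring
            _ = (∑ i, cR * (p m * ‖Δ m i‖))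
                  + ∑ i, cR * (p m * ∑ m'', p m'' * ‖Δ m'' i‖) :=
                Finset.sum_add_distrib
            _ = p m * (A m + ∑ m'', p m'' * A m'') := by rw [e1, e2, mul_add]
      _ = 2 * ∑ m, p m * A m := by
          simp only [mul_add]
          rw [Finset.sum_add_distrib]
          have : ∑ m, p m * ∑ m'', p m'' * A m'' = (∑ m, p m) * ∑ m'', p m'' * A m'' :=
            (Finset.sum_mul _ _ _).symm
          rw [this, hp1, one_mul]
          ring
  -- step 7 : Cauchy-Schwarz in m
  have hS : ∑ m, p m * Nd m
      ≤ Real.sqrt ((⨆ m : Fin dM, p m) * opNorm (omegaE dE dE' ω)) * frobNorm W := by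
    have c1 : ∑ m, p m * Nd m ≤ Real.sqrt (∑ m, p m) * Real.sqrt (∑ m, p m * Nd m ^ 2) := by
      have := sum_le_sqrt_mul_sqrt Finset.univ (fun m => Real.sqrt (p m))
        (fun m => Real.sqrt (p m) * Nd m) (fun m _ => Real.sqrt_nonneg _)
        (fun m _ => mul_nonneg (Real.sqrt_nonneg _) (hNd0 m))
      calc ∑ m, p m * Nd m
          = ∑ m, Real.sqrt (p m) * (Real.sqrt (p m) * Nd m) := by
            refine Finset.sum_congr rfl fun m _ => ?_
            rw [← mul_assoc, Real.mul_self_sqrt (hp0 m)]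
        _ ≤ Real.sqrt (∑ m, Real.sqrt (p m) ^ 2)
              * Real.sqrt (∑ m, (Real.sqrt (p m) * Nd m) ^ 2) := this
        _ = Real.sqrt (∑ m, p m) * Real.sqrt (∑ m, p m * Nd m ^ 2) := by
            rw [Finset.sum_congr rfl fun m _ => Real.sq_sqrt (hp0 m),
              Finset.sum_congr rfl fun m (_ : m ∈ Finset.univ) => (by
                rw [mul_pow, Real.sq_sqrt (hp0 m)]
                : (Real.sqrt (p m) * Nd m) ^ 2 = p m * Nd m ^ 2)]
    rw [hp1, Real.sqrt_one, one_mul] at c1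
    have c2 : ∑ m, p m * Nd m ^ 2 ≤ (⨆ m : Fin dM, p m) * ∑ m, Nd m ^ 2 := by
      rw [Finset.mul_sum]
      exact Finset.sum_le_sum fun m _ => mul_le_mul_of_nonneg_right (hple m) (sq_nonneg _)
    have c3 : ∑ m, Nd m ^ 2 ≤ opNorm (omegaE dE dE' ω) * ∑ q1, ∑ r, Complex.normSq (W q1 r) := by
      have : ∑ m, Nd m ^ 2 = ∑ m, ∑ q, Complex.normSq (dd m q) := by
        refine Finset.sum_congr rfl fun m _ => ?_
        rw [hNd]
        simp only
        exact Real.sq_sqrt (Finset.sum_nonneg fun q _ => Complex.normSq_nonneg _)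
      rw [this, hdd]
      exact sum_normSq_lock_le ψ ω hcomp W
    calc ∑ m, p m * Nd m ≤ Real.sqrt (∑ m, p m * Nd m ^ 2) := c1
      _ ≤ Real.sqrt ((⨆ m : Fin dM, p m)
            * (opNorm (omegaE dE dE' ω) * ∑ q1, ∑ r, Complex.normSq (W q1 r))) := by
          refine Real.sqrt_le_sqrt ?_
          refine c2.trans ?_
          exact mul_le_mul_of_nonneg_left c3 hmax0
      _ = Real.sqrt ((⨆ m : Fin dM, p m) * opNorm (omegaE dE dE' ω)) * frobNorm W := by
          rw [frobNorm_eq, ← Real.sqrt_mul (mul_nonneg hmax0 hop0), mul_assoc]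
  -- final chain
  calc |∑ mi : Fin dM × Fin s, ‖DU mi‖
        - ∑ mi : Fin dM × Fin s, ‖DV mi‖|
      ≤ ∑ mi : Fin dM × Fin s, ‖DU mi - DV mi‖ := habs1
    _ ≤ 2 * ∑ m, p m * A m := hsum2
    _ ≤ 2 * ∑ m, p m * (2 * η * Nd m) := by
        refine mul_le_mul_of_nonneg_left ?_ (by norm_num)
        exact Finset.sum_le_sum fun m _ => mul_le_mul_of_nonneg_left (hAbound m) (hp0 m)
    _ = 4 * η * ∑ m, p m * Nd m := by
        rw [Finset.mul_sum, Finset.mul_sum]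
        refine Finset.sum_congr rfl fun m _ => by ring
    _ ≤ 4 * η * (Real.sqrt ((⨆ m : Fin dM, p m) * opNorm (omegaE dE dE' ω)) * frobNorm W) := by
        refine mul_le_mul_of_nonneg_left hS ?_
        positivity
    _ = 4 * η * Real.sqrt ((⨆ m : Fin dM, p m) * opNorm (omegaE dE dE' ω)) * frobNorm W := by
        ring
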